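/- For EDBMs M1 and M2 in normal form, define M1 ∩ M2 entrywise as the minimum of corresponding entries when all minima exist (returning the canonical empty EDBM if some pair of entries is ≤-incomparable or if either input is empty). Then ⟦M1 ∩ M2⟧ = ⟦M1⟧ ∩ ⟦M2⟧. -/

import Mathlib

open scoped Classical

/-- Entries of an Event DBM: `(m,<)` / `(m,≤)` for `m ∈ ℤ`, `(∞,<)`, `(⊥,=)`, `(?,=)`. -/
inductive Entry where
  | bound (m : ℤ) (strict : Bool)
  | inf
  | bot
  | unc
deriving DecidableEq

/-- An EDBM on clocks `x₁,…,xₙ` (index `none` is the zero clock `x₀`). -/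
def EDBM (n : ℕ) := Option (Fin n) → Option (Fin n) → Entry

/-- A valuation of the `n` clocks (`none` is `⊥`). -/
def EVal (n : ℕ) := Fin n → Option ℝ

def ENonneg {n : ℕ} (v : EVal n) : Prop := ∀ i r, v i = some r → 0 ≤ r

/-- The signed value `|v|`: prophecy clocks (as given by `isP`) are negated;
`x₀` has value `0`. -/
def svalE {n : ℕ} (isP : Fin n → Bool) (v : EVal n) : Option (Fin n) → Option ℝ
  | none => some 0
  | some i => (v i).map (fun r => if isP i then -r else r)

/-- Satisfaction of an entry by (signed) values `a`, `b`: encodes `a − b ≺ m`,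
with `(⊥,=)` requiring one side to be `⊥`, `(∞,<)` requiring both sides real,
and `(?,=)` always true. -/
def Entry.sat : Entry → Option ℝ → Option ℝ → Prop
  | .unc, _, _ => True
  | .bot, a, b => a = none ∨ b = none
  | .inf, a, b => a ≠ none ∧ b ≠ none
  | .bound m s, a, b => ∃ ra rb, a = some ra ∧ b = some rb ∧
      (if s then ra - rb < (m : ℝ) else ra - rb ≤ (m : ℝ))

/-- `⟦M⟧`: the set of valuations satisfying all constraints of `M`. -/
def sem {n : ℕ} (isP : Fin n → Bool) (M : EDBM n) : Set (EVal n) :=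
  { v | ENonneg v ∧ ∀ i j, (M i j).sat (svalE isP v i) (svalE isP v j) }

/-- The ordering on EDBM entries: `(m,≺) ≤ (m',≺')` iff `m' = ?`, or
`m < m'` (in `ℤ ∪ {∞}`), or `m = m'` and (`≺ = ≺'` or `≺' = ≤`). -/
def Entry.le : Entry → Entry → Prop
  | _, .unc => True
  | .unc, _ => False
  | .bot, .bot => True
  | .bot, _ => False
  | _, .bot => False
  | .inf, .inf => True
  | .inf, .bound _ _ => False
  | .bound _ _, .inf => True
  | .bound m s, .bound m' s' => m < m' ∨ (m = m' ∧ (s = s' ∨ s' = false))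

/-- The canonical empty EDBM `M_∅`. -/
def Mempty (n : ℕ) : EDBM n := fun _ _ => .bound (-1) true

/-- `(⊥,=)` may only occur in row or column `0`. -/
def EDBM.WF {n : ℕ} (M : EDBM n) : Prop := ∀ i j : Fin n, M (some i) (some j) ≠ .bot

/-- Structural coherence of `⊥`/`?` entries (conditions (i)–(iii) of normal form). -/
def Coherent {n : ℕ} (M : EDBM n) : Prop :=
  (∀ i : Fin n, (M (some i) none = .bot ↔ M none (some i) = .bot) ∧
      (M (some i) none = .unc ↔ M none (some i) = .unc)) ∧
  (∀ i : Fin n, (M (some i) none = .bot ∨ M (some i) none = .unc) →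
      ∀ j : Fin n, M (some i) (some j) = .unc ∧ M (some j) (some i) = .unc) ∧
  (∀ i j : Fin n, M (some i) (some j) = .unc ↔
      ((M (some i) none = .unc ∨ M (some i) none = .bot) ∨
       (M (some j) none = .unc ∨ M (some j) none = .bot)))

/-- Tightness: no entrywise-smaller EDBM has the same semantics. -/
def Tight {n : ℕ} (isP : Fin n → Bool) (M : EDBM n) : Prop :=
  ∀ M' : EDBM n, (∀ i j, Entry.le (M' i j) (M i j)) → sem isP M' = sem isP M → M' = M

/-- Normal form: either the canonical empty EDBM, or a nonempty, well-formed,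
coherent and tight (canonical) EDBM. -/
def InNormalForm {n : ℕ} (isP : Fin n → Bool) (M : EDBM n) : Prop :=
  M = Mempty n ∨ (sem isP M ≠ ∅ ∧ M.WF ∧ Coherent M ∧ Tight isP M)

/-- The `Future` operation on EDBMs. -/
noncomputable def futureE {n : ℕ} (isP : Fin n → Bool) (M : EDBM n) : EDBM n :=
  if M = Mempty n then Mempty n else
  fun i j =>
    match i, j with
    | some k, none =>
        if M (some k) none = .bot ∨ M (some k) none = .unc then M (some k) none
        else if isP k then .bound 0 false else .inf
    | i, j => M i j

/-- The `Past` operation on EDBMs. -/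
noncomputable def pastE {n : ℕ} (isP : Fin n → Bool) (M : EDBM n) : EDBM n :=
  if M = Mempty n then Mempty n else
  fun i j =>
    match i, j with
    | none, some k =>
        if M none (some k) = .bot ∨ M none (some k) = .unc then M none (some k)
        else if isP k then .inf else .bound 0 false
    | i, j => M i j

/-- Entrywise intersection of EDBMs; `M_∅` if either input is empty or some pair
of entries is `≤`-incomparable. -/
noncomputable def interE {n : ℕ} (M₁ M₂ : EDBM n) : EDBM n :=
  if M₁ = Mempty n ∨ M₂ = Mempty n then Mempty n
  else if ∀ i j, Entry.le (M₁ i j) (M₂ i j) ∨ Entry.le (M₂ i j) (M₁ i j) then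
    fun i j => if Entry.le (M₁ i j) (M₂ i j) then M₁ i j else M₂ i j
  else Mempty n

/-- Release of clock `k`: every entry in its row and column becomes `(?,=)`. -/
noncomputable def relE {n : ℕ} (M : EDBM n) (k : Fin n) : EDBM n :=
  if M = Mempty n then Mempty n else
  fun i j => if i = some k ∨ j = some k then .unc else M i j

/-- Time elapse on valuations: history clocks increase, prophecy clocks decrease. -/
def eElapse {n : ℕ} (isP : Fin n → Bool) (v : EVal n) (t : ℝ) : EVal n :=
  fun i => (v i).map (fun r => if isP i then r - t else r + t)

def eCanElapse {n : ℕ} (isP : Fin n → Bool) (v : EVal n) (t : ℝ) : Prop :=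
  0 ≤ t ∧ ∀ i r, isP i = true → v i = some r → t ≤ r

lemma sem_Mempty {n : ℕ} (isP : Fin n → Bool) : sem isP (Mempty n) = ∅ := by
  ext v
  simp only [sem, Set.mem_setOf_eq, Set.mem_empty_iff_false, iff_false]
  rintro ⟨-, h⟩
  have h0 := h none none
  simp only [Mempty, Entry.sat, svalE] at h0
  obtain ⟨ra, rb, ha, hb, hl⟩ := h0
  simp only [Option.some.injEq] at ha hb
  subst ha; subst hb
  norm_num at hl

lemma Entry.le_sat {e e' : Entry} (h : Entry.le e e') {a b : Option ℝ}
    (hs : e.sat a b) : e'.sat a b := by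
  cases e <;> cases e' <;>
    simp_all only [Entry.le, Entry.sat] <;> try trivial
  case bound.bound m s m' s' =>
    obtain ⟨ra, rb, ha, hb, hl⟩ := hs
    refine ⟨ra, rb, ha, hb, ?_⟩
    rcases h with h | ⟨rfl, h⟩
    · have hm : (m : ℝ) < m' := by exact_mod_cast h
      cases s <;> cases s' <;> simp only [Bool.false_eq_true, if_false, if_true] at hl ⊢ <;>
        linarith
    · rcases h with rfl | rfl
      · exact hl
      · cases s <;> simp only [Bool.false_eq_true, if_false, if_true] at hl ⊢ <;> linarith
  case bound.inf m s =>
    obtain ⟨ra, rb, ha, hb, -⟩ := hs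
    exact ⟨by simp [ha], by simp [hb]⟩

lemma Entry.not_comp_sat {e e' : Entry} (h : ¬(Entry.le e e' ∨ Entry.le e' e))
    {a b : Option ℝ} (hs : e.sat a b) (hs' : e'.sat a b) : False := by
  cases e with
  | unc => exact h (Or.inr (by simp [Entry.le]))
  | bot =>
    cases e' with
    | unc => exact h (Or.inl (by simp [Entry.le]))
    | bot => exact h (Or.inl (by simp [Entry.le]))
    | inf =>
      rcases hs with rfl | rfl
      · exact hs'.1 rfl
      · exact hs'.2 rfl
    | bound m s =>
      obtain ⟨ra, rb, ha, hb, -⟩ := hs'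
      rcases hs with h0 | h0 <;> simp_all
  | inf =>
    cases e' with
    | unc => exact h (Or.inl (by simp [Entry.le]))
    | inf => exact h (Or.inl (by simp [Entry.le]))
    | bound m s => exact h (Or.inr (by simp [Entry.le]))
    | bot =>
      rcases hs' with rfl | rfl
      · exact hs.1 rfl
      · exact hs.2 rfl
  | bound m s =>
    cases e' with
    | unc => exact h (Or.inl (by simp [Entry.le]))
    | inf => exact h (Or.inl (by simp [Entry.le]))
    | bot =>
      obtain ⟨ra, rb, ha, hb, -⟩ := hs
      rcases hs' with h0 | h0 <;> simp_all
    | bound m' s' =>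
      apply h
      rcases lt_trichotomy m m' with hm | rfl | hm
      · exact Or.inl (Or.inl hm)
      · cases s <;> cases s' <;> simp [Entry.le]
      · exact Or.inr (Or.inl hm)

/-- Correctness of intersection on normal-form EDBMs: `⟦M₁ ∩ M₂⟧ = ⟦M₁⟧ ∩ ⟦M₂⟧`. -/
theorem interE_correct {n : ℕ} (isP : Fin n → Bool) (M₁ M₂ : EDBM n)
    (h₁ : InNormalForm isP M₁) (h₂ : InNormalForm isP M₂) :
    sem isP (interE M₁ M₂) = sem isP M₁ ∩ sem isP M₂ := by
  unfold interE
  by_cases hE : M₁ = Mempty n ∨ M₂ = Mempty n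
  · rw [if_pos hE, sem_Mempty]
    rcases hE with rfl | rfl
    · rw [sem_Mempty, Set.empty_inter]
    · rw [sem_Mempty, Set.inter_empty]
  · rw [if_neg hE]
    by_cases hC : ∀ i j, Entry.le (M₁ i j) (M₂ i j) ∨ Entry.le (M₂ i j) (M₁ i j)
    · erw [if_pos hC]
      ext v
      simp only [sem, Set.mem_setOf_eq, Set.mem_inter_iff]
      constructor
      · rintro ⟨hn, h⟩
        refine ⟨⟨hn, fun i j => ?_⟩, ⟨hn, fun i j => ?_⟩⟩ <;>
          have hij := h i j <;> by_cases hle : Entry.le (M₁ i j) (M₂ i j) <;>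
            simp only [hle, if_pos, if_neg, if_true, if_false] at hij
        · exact hij
        · rcases hC i j with h' | h'
          · exact absurd h' hle
          · exact Entry.le_sat h' hij
        · exact Entry.le_sat hle hij
        · exact hij
      · rintro ⟨⟨hn, ha⟩, ⟨-, hb⟩⟩
        refine ⟨hn, fun i j => ?_⟩
        by_cases hle : Entry.le (M₁ i j) (M₂ i j) <;> simp [hle, ha i j, hb i j]
    · erw [if_neg hC, sem_Mempty]
      push_neg at hC
      obtain ⟨i, j, hij⟩ := hC
      ext v
      simp only [Set.mem_empty_iff_false, Set.mem_inter_iff, false_iff, not_and]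
      rintro ⟨-, ha⟩ ⟨-, hb⟩
      exact Entry.not_comp_sat (by tauto) (ha i j) (hb i j)
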